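/- Let $X$ be a compact metric space, $f:X\to X$ continuous, $x\in X$, and $C$ a non-empty closed subset of $X$. Then $\overline{\omega}(x,f)\subseteq C$ if and only if $\lim_{n\to\infty}\frac{1}{n}\sum_{i=0}^{n-1}d(f^i(x),C)=0$, where $d(p,C)=\inf_{q\in C}d(p,q)$. -/

import Mathlib

open Filter Metric Set
open scoped Classical Topology

noncomputable def upperDensity (A : Set ℕ) : ℝ :=
  Filter.limsup
    (fun n : ℕ => (((Finset.range n).filter (fun i => i ∈ A)).card : ℝ) / n) Filter.atTop

def HasDensityOne (A : Set ℕ) : Prop :=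
  Filter.Tendsto
    (fun n : ℕ => (((Finset.range n).filter (fun i => i ∈ A)).card : ℝ) / n) Filter.atTop (nhds 1)

def omegaBarSeq {X : Type*} [MetricSpace X] (x : ℕ → X) : Set X :=
  {y | ∀ ε > 0, 0 < upperDensity {i | dist (x i) y < ε}}

def omegaBar {X : Type*} [MetricSpace X] (f : X → X) (x : X) : Set X :=
  omegaBarSeq (fun i => f^[i] x)

/-- counting function -/
noncomputable def cnt (A : Set ℕ) (n : ℕ) : ℝ :=
  (((Finset.range n).filter (fun i => i ∈ A)).card : ℝ) / n

lemma upperDensity_eq (A : Set ℕ) : upperDensity A = Filter.limsup (cnt A) Filter.atTop := rfl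

lemma cnt_nonneg (A : Set ℕ) (n : ℕ) : 0 ≤ cnt A n := by
  unfold cnt; positivity

lemma cnt_le_one (A : Set ℕ) (n : ℕ) : cnt A n ≤ 1 := by
  unfold cnt
  rcases Nat.eq_zero_or_pos n with h | h
  · simp [h]
  · rw [div_le_one (by exact_mod_cast h)]
    exact_mod_cast (Finset.card_filter_le _ _).trans (by simp)

lemma div_nat_mono {a b : ℝ} (n : ℕ) (h : a ≤ b) (ha : 0 ≤ a) : a / n ≤ b / n := by
  rcases Nat.eq_zero_or_pos n with hn | hn
  · simp [hn]
  · have : (0:ℝ) < n := by exact_mod_cast hn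
    gcongr

lemma cnt_bdd (A : Set ℕ) : IsBoundedUnder (· ≤ ·) atTop (cnt A) :=
  isBoundedUnder_of ⟨1, cnt_le_one A⟩

lemma cnt_bdd_below (A : Set ℕ) : IsBoundedUnder (· ≥ ·) atTop (cnt A) :=
  isBoundedUnder_of ⟨0, cnt_nonneg A⟩

lemma cnt_cobdd_le (A : Set ℕ) : IsCoboundedUnder (· ≤ ·) atTop (cnt A) :=
  (cnt_bdd_below A).isCoboundedUnder_le

lemma cnt_cobdd_ge (A : Set ℕ) : IsCoboundedUnder (· ≥ ·) atTop (cnt A) :=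
  (cnt_bdd A).isCoboundedUnder_ge

lemma upperDensity_mono {A B : Set ℕ} (h : A ⊆ B) : upperDensity A ≤ upperDensity B := by
  rw [upperDensity_eq, upperDensity_eq]
  refine limsup_le_limsup (Eventually.of_forall fun n => ?_) (cnt_cobdd_le A) (cnt_bdd B)
  refine div_nat_mono n ?_ (by positivity)
  exact_mod_cast Finset.card_le_card (Finset.monotone_filter_right _ fun i _ hi => h hi)

lemma upperDensity_union_le (A B : Set ℕ) :
    upperDensity (A ∪ B) ≤ upperDensity A + upperDensity B := by
  rw [upperDensity_eq, upperDensity_eq, upperDensity_eq]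
  calc limsup (cnt (A ∪ B)) atTop ≤ limsup (cnt A + cnt B) atTop := by
        refine limsup_le_limsup (Eventually.of_forall fun n => ?_) (cnt_cobdd_le _)
          (isBoundedUnder_of ⟨2, fun n => by
            have := add_le_add (cnt_le_one A n) (cnt_le_one B n)
            have h2 : (1:ℝ) + 1 = 2 := by norm_num
            simpa [h2] using this⟩)
        show cnt (A ∪ B) n ≤ cnt A n + cnt B n
        unfold cnt
        rw [← add_div]
        refine div_nat_mono n ?_ (by positivity)
        have hsub : (@Finset.filter ℕ (fun i => i ∈ A ∪ B)
            (fun i => Classical.propDecidable _) (Finset.range n)) ⊆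
            ((Finset.range n).filter (fun i => i ∈ A)) ∪
            ((Finset.range n).filter (fun i => i ∈ B)) := by
          intro i hi
          simp only [Finset.mem_filter, Finset.mem_union, Set.mem_union] at hi ⊢
          tauto
        exact_mod_cast (Finset.card_le_card hsub).trans (Finset.card_union_le _ _)
    _ ≤ limsup (cnt A) atTop + limsup (cnt B) atTop :=
        limsup_add_le (cnt_bdd_below A) (cnt_bdd A) (cnt_cobdd_le B) (cnt_bdd B)

lemma upperDensity_empty : upperDensity (∅ : Set ℕ) = 0 := by
  rw [upperDensity_eq]
  have : cnt (∅ : Set ℕ) = fun _ => (0 : ℝ) := by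
    funext n; unfold cnt; simp
  rw [this, limsup_const]

lemma upperDensity_biUnion_le {ι : Type*} (s : Finset ι) (A : ι → Set ℕ) :
    upperDensity (⋃ j ∈ s, A j) ≤ ∑ j ∈ s, upperDensity (A j) := by
  classical
  induction s using Finset.cons_induction with
  | empty => simp [upperDensity_empty]
  | cons a s ha ih =>
      rw [Finset.sum_cons]
      refine le_trans (le_trans (upperDensity_mono ?_)
        (upperDensity_union_le (A a) (⋃ j ∈ s, A j))) (by gcongr)
      intro i hi
      simp only [Set.mem_iUnion, Set.mem_union, exists_prop, Finset.mem_cons] at hi ⊢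
      obtain ⟨j, hj, hij⟩ := hi
      rcases hj with rfl | hj
      · exact Or.inl hij
      · exact Or.inr ⟨j, hj, hij⟩

theorem stmt14 {X : Type*} [MetricSpace X] [CompactSpace X] (f : X → X) (hf : Continuous f)
    (x : X) (C : Set X) (hC : IsClosed C) (hCne : C.Nonempty) :
    omegaBar f x ⊆ C ↔
      Filter.Tendsto (fun n : ℕ => (∑ i ∈ Finset.range n, Metric.infDist (f^[i] x) C) / n)
        Filter.atTop (nhds 0) := by
  set a : ℕ → ℝ := fun i => Metric.infDist (f^[i] x) C with ha
  set avg : ℕ → ℝ := fun n => (∑ i ∈ Finset.range n, a i) / n with havg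
  obtain ⟨c0, hc0⟩ := hCne
  have hXb : Bornology.IsBounded (Set.univ : Set X) := isBounded_of_compactSpace
  set M : ℝ := Metric.diam (Set.univ : Set X) + 1 with hM
  have ha_nonneg : ∀ i, 0 ≤ a i := fun i => Metric.infDist_nonneg
  have ha_le : ∀ i, a i ≤ M := by
    intro i
    refine le_trans (Metric.infDist_le_dist_of_mem hc0) ?_
    have := Metric.dist_le_diam_of_mem hXb (Set.mem_univ (f^[i] x)) (Set.mem_univ c0)
    simp only [hM]; linarith
  have hM_pos : 0 < M := by
    have := Metric.diam_nonneg (s := (Set.univ : Set X))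
    simp only [hM]; linarith
  have havg_nonneg : ∀ n, 0 ≤ avg n := by
    intro n; simp only [havg]
    have : 0 ≤ ∑ i ∈ Finset.range n, a i := Finset.sum_nonneg fun i _ => ha_nonneg i
    positivity
  constructor
  · -- forward
    intro hsub
    have havg_le : ∀ n, avg n ≤ M := by
      intro n
      simp only [havg]
      rcases Nat.eq_zero_or_pos n with h | h
      · simp [h]; positivity
      · rw [div_le_iff₀ (by exact_mod_cast h)]
        calc ∑ i ∈ Finset.range n, a i ≤ ∑ _i ∈ Finset.range n, M :=
              Finset.sum_le_sum fun i _ => ha_le i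
          _ = M * n := by rw [Finset.sum_const, Finset.card_range, nsmul_eq_mul]; ring
    have hbdd : IsBoundedUnder (· ≤ ·) atTop avg := isBoundedUnder_of ⟨M, havg_le⟩
    have hbdd' : IsBoundedUnder (· ≥ ·) atTop avg := isBoundedUnder_of ⟨0, havg_nonneg⟩
    refine tendsto_of_le_liminf_of_limsup_le ?_ ?_ hbdd hbdd'
    · exact le_liminf_of_le hbdd.isCoboundedUnder_ge (Eventually.of_forall havg_nonneg)
    · by_contra hpos
      push_neg at hpos
      set ε : ℝ := limsup avg atTop with hε
      have hε_pos : 0 < ε := hpos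
      set B : Set ℕ := {i | ε / 4 < a i} with hB
      -- pointwise estimate: avg n ≤ ε/4 + M * cnt B n
      have hpt : ∀ n, avg n ≤ ε / 4 + M * cnt B n := by
        intro n
        rcases Nat.eq_zero_or_pos n with h | h
        · have : cnt B 0 = 0 := by unfold cnt; simp
          simp [h, havg, this]; positivity
        · have hn : (0:ℝ) < n := by exact_mod_cast h
          simp only [havg]
          rw [div_le_iff₀ hn]
          have hsplit := Finset.sum_filter_add_sum_filter_not (Finset.range n)
            (fun i => i ∈ B) a
          rw [← hsplit]
          have h1 : ∑ i ∈ (Finset.range n).filter (fun i => i ∈ B), a i ≤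
              M * ((Finset.range n).filter (fun i => i ∈ B)).card := by
            rw [mul_comm]
            calc _ ≤ ∑ _i ∈ (Finset.range n).filter (fun i => i ∈ B), M :=
                  Finset.sum_le_sum fun i _ => ha_le i
              _ = _ := by rw [Finset.sum_const, nsmul_eq_mul]
          have h2 : ∑ i ∈ (Finset.range n).filter (fun i => ¬ i ∈ B), a i ≤
              (ε / 4) * n := by
            calc _ ≤ ∑ _i ∈ (Finset.range n).filter (fun i => ¬ i ∈ B), (ε / 4) :=
                  Finset.sum_le_sum fun i hi => by
                    have := (Finset.mem_filter.mp hi).2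
                    simp only [hB, Set.mem_setOf_eq, not_lt] at this
                    exact this
              _ = (ε / 4) * ((Finset.range n).filter (fun i => ¬ i ∈ B)).card := by
                  rw [Finset.sum_const, nsmul_eq_mul]; ring
              _ ≤ (ε / 4) * n := by
                  have hc : (((Finset.range n).filter (fun i => ¬ i ∈ B)).card : ℝ) ≤ n := by
                    exact_mod_cast (Finset.card_filter_le _ _).trans
                      (le_of_eq (Finset.card_range n))
                  have hε4 : (0:ℝ) ≤ ε / 4 := by linarith
                  exact mul_le_mul_of_nonneg_left hc hε4
          have h4 : M * (cnt B n * n) =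
              M * ((Finset.range n).filter (fun i => i ∈ B)).card := by
            unfold cnt
            field_simp
          calc _ ≤ M * ((Finset.range n).filter (fun i => i ∈ B)).card + (ε/4) * n := by
                linarith
            _ = (ε / 4 + M * cnt B n) * n := by rw [← h4]; ring
      -- frequently avg n > ε/2, hence cnt B n is frequently large
      have hfreq : ∃ᶠ n in atTop, ε / 2 < avg n :=
        frequently_lt_of_lt_limsup hbdd'.isCoboundedUnder_le (by simp only [← hε]; linarith)
      have hfreq2 : ∃ᶠ n in atTop, ε / (4 * M) ≤ cnt B n := by
        refine hfreq.mono fun n hn => ?_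
        have h5 := hpt n
        have h6 : ε / 4 ≤ M * cnt B n := by linarith
        rw [div_le_iff₀ (by positivity)]
        nlinarith
      have hudB : 0 < upperDensity B := by
        have h7 : ε / (4 * M) ≤ upperDensity B := by
          rw [upperDensity_eq]
          exact le_limsup_of_frequently_le hfreq2 (cnt_bdd B)
        have : 0 < ε / (4 * M) := by positivity
        linarith
      -- consider the compact set of points far from C
      set K : Set X := {p | ε / 4 ≤ Metric.infDist p C} with hK
      have hKclosed : IsClosed K :=
        isClosed_le continuous_const (Metric.continuous_infDist_pt C)
      have hKcompact : IsCompact K := hKclosed.isCompact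
      by_cases hex : ∃ y ∈ K, ∀ η > 0, 0 < upperDensity {i | dist (f^[i] x) y < η}
      · obtain ⟨y, hyK, hy⟩ := hex
        have hyC : y ∈ C := hsub hy
        have h0 : Metric.infDist y C = 0 := Metric.infDist_zero_of_mem hyC
        have : ε / 4 ≤ 0 := by rw [← h0]; exact hyK
        linarith
      · push_neg at hex
        choose η hη hud using hex
        obtain ⟨t, hcov⟩ := hKcompact.elim_nhds_subcover'
          (fun y hy => Metric.ball y (η y hy))
          (fun y hy => Metric.ball_mem_nhds y (hη y hy))
        have hBsub : B ⊆ ⋃ y ∈ t, {i | dist (f^[i] x) (y : X) < η y y.2} := by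
          intro i hi
          have hiK : f^[i] x ∈ K := by
            simp only [hK, Set.mem_setOf_eq]
            exact le_of_lt hi
          have := hcov hiK
          simp only [Set.mem_iUnion, exists_prop] at this ⊢
          obtain ⟨y, hyt, hyb⟩ := this
          exact ⟨y, hyt, Metric.mem_ball.mp hyb⟩
        have h8 : upperDensity B ≤
            ∑ y ∈ t, upperDensity {i | dist (f^[i] x) (y : X) < η y y.2} :=
          le_trans (upperDensity_mono hBsub) (upperDensity_biUnion_le t _)
        have h9 : ∑ y ∈ t, upperDensity {i | dist (f^[i] x) (y : X) < η y y.2} ≤ 0 :=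
          Finset.sum_nonpos fun y _ => hud y y.2
        linarith
  · -- backward
    intro hT y hy
    by_contra hyC
    have hδ : 0 < Metric.infDist y C := (hC.notMem_iff_infDist_pos ⟨c0, hc0⟩).1 hyC
    set δ := Metric.infDist y C with hδ'
    have hA : 0 < upperDensity {i | dist (f^[i] x) y < δ / 2} := hy (δ / 2) (half_pos hδ)
    set A : Set ℕ := {i | dist (f^[i] x) y < δ / 2} with hA'
    have hai : ∀ i ∈ A, δ / 2 ≤ a i := by
      intro i hi
      have h1 : δ ≤ a i + dist y (f^[i] x) := Metric.infDist_le_infDist_add_dist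
      rw [dist_comm] at h1
      have h2 : dist (f^[i] x) y < δ / 2 := hi
      linarith
    have hpt : ∀ n, cnt A n ≤ (2 / δ) * avg n := by
      intro n
      have h1 : (δ / 2) * ((Finset.range n).filter (fun i => i ∈ A)).card ≤
          ∑ i ∈ Finset.range n, a i := by
        calc (δ / 2) * ((Finset.range n).filter (fun i => i ∈ A)).card
            = ∑ _i ∈ (Finset.range n).filter (fun i => i ∈ A), (δ / 2) := by
              rw [Finset.sum_const, nsmul_eq_mul]; ring
          _ ≤ ∑ i ∈ (Finset.range n).filter (fun i => i ∈ A), a i :=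
              Finset.sum_le_sum fun i hi => hai i (Finset.mem_filter.mp hi).2
          _ ≤ ∑ i ∈ Finset.range n, a i :=
              Finset.sum_le_sum_of_subset_of_nonneg (Finset.filter_subset _ _)
                fun i _ _ => ha_nonneg i
      have hδ0 : δ ≠ 0 := ne_of_gt hδ
      have h2 : (((Finset.range n).filter (fun i => i ∈ A)).card : ℝ) ≤
          (2 / δ) * ∑ i ∈ Finset.range n, a i := by
        have h1' := mul_le_mul_of_nonneg_left h1 (le_of_lt (div_pos two_pos hδ))
        calc (((Finset.range n).filter (fun i => i ∈ A)).card : ℝ)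
            = (2 / δ) * ((δ / 2) * ((Finset.range n).filter (fun i => i ∈ A)).card) := by
              field_simp
          _ ≤ (2 / δ) * ∑ i ∈ Finset.range n, a i := h1'
      calc cnt A n ≤ ((2 / δ) * ∑ i ∈ Finset.range n, a i) / n :=
            div_nat_mono n h2 (by positivity)
        _ = (2 / δ) * avg n := by simp only [havg]; ring
    have hlim : Tendsto (fun n => (2 / δ) * avg n) atTop (𝓝 0) := by
      have h3 := hT.const_mul (2 / δ)
      simpa [havg] using h3
    have h4 : upperDensity A ≤ 0 := by
      rw [upperDensity_eq]
      calc limsup (cnt A) atTop ≤ limsup (fun n => (2 / δ) * avg n) atTop :=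
            limsup_le_limsup (Eventually.of_forall hpt) (cnt_cobdd_le A)
              hlim.isBoundedUnder_le
        _ = 0 := hlim.limsup_eq
    linarith
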